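/- Let X be a real normed space, E ⊆ X, and T : E → X a contractive mapping with modulus τ : (0,∞) → (0,∞), i.e. for all x, y ∈ E and all ε > 0: ‖x − y‖ ≥ ε implies ‖Tx − Ty‖ + τ(ε) ≤ ‖x − y‖. Define ψ : [0,∞) → [0,∞) by ψ(0) := 0 and ψ(ε) := inf{τ(μ) : μ ≥ ε} for ε > 0, and suppose ψ(ε) > 0 for all ε > 0. Then ψ is nondecreasing and T is ψ-weakly contractive: ‖Tx − Ty‖ ≤ ‖x − y‖ − ψ(‖x − y‖) for all x, y ∈ E. -/

import Mathlib

/-- A contractive mapping with modulus τ is ψ-weakly contractive for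
ψ(0) := 0 and ψ(ε) := inf{τ(μ) : μ ≥ ε} (ε > 0), provided this infimum is always
positive; moreover ψ is nondecreasing. -/
theorem stmt_18 {X : Type*} [NormedAddCommGroup X] [NormedSpace ℝ X]
    (E : Set X) (T : X → X) (τ : ℝ → ℝ)
    (hτpos : ∀ ε : ℝ, 0 < ε → 0 < τ ε)
    (hcontr : ∀ x ∈ E, ∀ y ∈ E, ∀ ε : ℝ, 0 < ε → ε ≤ ‖x - y‖ →
      ‖T x - T y‖ + τ ε ≤ ‖x - y‖)
    (ψ : ℝ → ℝ) (hψ0 : ψ 0 = 0)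
    (hψdef : ∀ ε : ℝ, 0 < ε → ψ ε = sInf (τ '' Set.Ici ε))
    (hψpos : ∀ ε : ℝ, 0 < ε → 0 < ψ ε) :
    (∀ s t : ℝ, 0 ≤ s → s ≤ t → ψ s ≤ ψ t) ∧
    (∀ x ∈ E, ∀ y ∈ E, ‖T x - T y‖ ≤ ‖x - y‖ - ψ ‖x - y‖) := by
  have hbdd : ∀ ε : ℝ, 0 < ε → BddBelow (τ '' Set.Ici ε) := by
    intro ε hε
    refine ⟨0, ?_⟩
    rintro _ ⟨μ, hμ, rfl⟩
    exact (hτpos μ (lt_of_lt_of_le hε hμ)).le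
  constructor
  · intro s t hs hst
    rcases eq_or_lt_of_le hs with rfl | hs
    · rcases eq_or_lt_of_le hst with rfl | ht
      · exact le_rfl
      · rw [hψ0]; exact (hψpos t ht).le
    · have ht : 0 < t := lt_of_lt_of_le hs hst
      rw [hψdef s hs, hψdef t ht]
      exact csInf_le_csInf (hbdd s hs)
        ((Set.nonempty_Ici).image τ)
        (Set.image_mono (Set.Ici_subset_Ici.mpr hst))
  · intro x hx y hy
    rcases eq_or_ne x y with rfl | hxy
    · simp [hψ0]
    · have hd : 0 < ‖x - y‖ := by
        simpa [sub_eq_zero] using hxy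
      have h1 : ψ ‖x - y‖ ≤ τ ‖x - y‖ := by
        rw [hψdef _ hd]
        exact csInf_le (hbdd _ hd) ⟨‖x - y‖, Set.mem_Ici.mpr le_rfl, rfl⟩
      have h2 := hcontr x hx y hy ‖x - y‖ hd le_rfl
      linarith
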